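/- Let t be a positive integer, d = 2t−1, G = K_{2t} minus a perfect matching, and J_t the strong product of d copies of G. Then no set of d vertices dominates J_t; i.e., γ(J_t) ≥ d + 1 = 2t. -/

import Mathlib

open Finset

namespace SG

variable {V : Type*}

/-- Closed neighborhood of a vertex as a `Finset`. -/
def closedNbhd [Fintype V] [DecidableEq V] (G : SimpleGraph V) [DecidableRel G.Adj]
    (v : V) : Finset V :=
  insert v (G.neighborFinset v)

/-- A fractional domination: weights in `[0,1]` with each closed neighborhood of weight `≥ 1`. -/
def IsFracDom [Fintype V] [DecidableEq V] (G : SimpleGraph V) [DecidableRel G.Adj]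
    (f : V → ℝ) : Prop :=
  (∀ v, 0 ≤ f v ∧ f v ≤ 1) ∧ ∀ v, 1 ≤ ∑ u ∈ closedNbhd G v, f u

/-- The fractional domination number. -/
noncomputable def fracDomNumber [Fintype V] [DecidableEq V] (G : SimpleGraph V)
    [DecidableRel G.Adj] : ℝ :=
  sInf {x | ∃ f, IsFracDom G f ∧ x = ∑ v, f v}

/-- A dominating set: every vertex not in `S` is adjacent to some vertex of `S`. -/
def IsDomSet (G : SimpleGraph V) (S : Finset V) : Prop :=
  ∀ v, v ∉ S → ∃ u ∈ S, G.Adj u v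

/-- The domination number. -/
noncomputable def domNumber [Fintype V] (G : SimpleGraph V) : ℕ :=
  sInf {k | ∃ S : Finset V, S.card = k ∧ IsDomSet G S}


/-- `K_{2t}` minus a perfect matching: vertices `0,…,2t-1`, with the matching
pairing `2k` with `2k+1`; two vertices are adjacent iff they lie in different
matching pairs. -/
def Kmm (t : ℕ) : SimpleGraph (Fin (2 * t)) where
  Adj i j := (i : ℕ) / 2 ≠ (j : ℕ) / 2
  symm := ⟨fun _ _ h => Ne.symm h⟩
  loopless := ⟨fun _ h => h rfl⟩

instance (t : ℕ) : DecidableRel (Kmm t).Adj :=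
  fun i j => inferInstanceAs (Decidable ((i : ℕ) / 2 ≠ (j : ℕ) / 2))

/-- `J_t`: the strong product of `d = 2t - 1` copies of `K_{2t}` minus a
perfect matching.  Distinct tuples are adjacent iff they are componentwise
equal-or-adjacent. -/
def Jt (t : ℕ) : SimpleGraph (Fin (2 * t - 1) → Fin (2 * t)) where
  Adj x y := x ≠ y ∧ ∀ i, x i = y i ∨ (Kmm t).Adj (x i) (y i)
  symm := by
    constructor
    rintro x y ⟨h1, h2⟩
    exact ⟨Ne.symm h1, fun i => (h2 i).imp Eq.symm fun a => (Kmm t).adj_symm a⟩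
  loopless := ⟨fun x h => h.1 rfl⟩

instance (t : ℕ) : DecidableRel (Jt t).Adj :=
  fun x y =>
    inferInstanceAs (Decidable (x ≠ y ∧ ∀ i, x i = y i ∨ (Kmm t).Adj (x i) (y i)))


/-- no set of `d = 2t - 1` vertices dominates `J_t`;
hence `γ(J_t) ≥ d + 1 = 2t`. -/
theorem Jt_no_small_domSet (t : ℕ) (ht : 1 ≤ t) :
    (∀ S : Finset (Fin (2 * t - 1) → Fin (2 * t)),
        S.card = 2 * t - 1 → ¬ IsDomSet (Jt t) S) ∧
      2 * t ≤ domNumber (Jt t) := by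
  have hmain : ∀ S : Finset (Fin (2 * t - 1) → Fin (2 * t)),
      S.card = 2 * t - 1 → ¬ IsDomSet (Jt t) S := by
    intro S hS hdom
    -- enumerate S
    let e : Fin (2 * t - 1) ≃ S := ((S.equivFin).trans (finCongr hS)).symm
    -- flip map
    let flip : Fin (2 * t) → Fin (2 * t) := fun v =>
      ⟨if v.val % 2 = 0 then v.val + 1 else v.val - 1, by
        rcases v with ⟨v, hv⟩; dsimp only; split <;> omega⟩
    have hflip_ne : ∀ v : Fin (2 * t), flip v ≠ v := by
      intro v h
      have := congrArg Fin.val h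
      rcases v with ⟨v, hv⟩
      simp only [flip] at this
      split at this <;> omega
    have hflip_div : ∀ v : Fin (2 * t), ((flip v : ℕ)) / 2 = (v : ℕ) / 2 := by
      intro v
      rcases v with ⟨v, hv⟩
      simp only [flip]
      split <;> omega
    let y : Fin (2 * t - 1) → Fin (2 * t) := fun i => flip ((e i : Fin (2 * t - 1) → Fin (2 * t)) i)
    have key : ∀ u ∈ S, ∃ i : Fin (2 * t - 1), y i = flip (u i) := by
      intro u hu
      refine ⟨(finCongr hS) (S.equivFin ⟨u, hu⟩), ?_⟩
      have : e ((finCongr hS) (S.equivFin ⟨u, hu⟩)) = ⟨u, hu⟩ := by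
        simp [e]
      simp only [y, this]
    have hyS : y ∉ S := by
      intro hy
      obtain ⟨i, hi⟩ := key y hy
      exact hflip_ne (y i) hi.symm
    obtain ⟨u, hu, hadj⟩ := hdom y hyS
    obtain ⟨i, hi⟩ := key u hu
    rcases hadj.2 i with h | h
    · rw [hi] at h; exact hflip_ne (u i) h.symm
    · rw [hi] at h
      exact h (hflip_div (u i)).symm
  refine ⟨hmain, ?_⟩
  have hcard : 2 * t - 1 ≤ Fintype.card (Fin (2 * t - 1) → Fin (2 * t)) := by
    simp only [Fintype.card_fun, Fintype.card_fin]
    calc 2 * t - 1 ≤ 2 * t := Nat.sub_le _ _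
    _ ≤ (2 * t) ^ (2 * t - 1) := Nat.le_self_pow (by omega) _
  have hne : {k | ∃ S : Finset (Fin (2 * t - 1) → Fin (2 * t)),
      S.card = k ∧ IsDomSet (Jt t) S}.Nonempty := by
    exact ⟨_, Finset.univ, rfl, fun v hv => absurd (Finset.mem_univ v) hv⟩
  refine le_csInf hne ?_
  rintro b ⟨S, hSb, hSdom⟩
  by_contra hb
  push_neg at hb
  have hble : S.card ≤ 2 * t - 1 := by omega
  obtain ⟨T, hST, hT⟩ := Finset.exists_superset_card_eq hble hcard
  refine hmain T hT ?_
  intro v hv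
  obtain ⟨u, hu, huv⟩ := hSdom v (fun h => hv (hST h))
  exact ⟨u, hST hu, huv⟩

end SG
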